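/- Let (Ω, P) be a probability space, let r : Ω → [0,∞) be integrable, and fix γ₀ ∈ ℝ. For S > 0, define the average true positive rate TPR(S) = ∫_Ω Φ(γ₀ + r(ω)/√S) dP(ω). Then √S·( TPR(S) − Φ(γ₀) ) tends to φ(γ₀)·∫_Ω r dP as S → ∞, where φ(u) = (1/√(2π))·e^{−u²/2}. -/

import Mathlib

open MeasureTheory ProbabilityTheory

/-- `Φ`, the CDF of the standard normal distribution. -/
noncomputable def stdGaussianCDF (x : ℝ) : ℝ :=
  (gaussianReal 0 1 (Set.Iic x)).toReal


lemma cdf_eq (x : ℝ) : stdGaussianCDF x = ∫ t in Set.Iic x, gaussianPDFReal 0 1 t := by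
  rw [stdGaussianCDF, gaussianReal_apply_eq_integral 0 one_ne_zero,
    ENNReal.toReal_ofReal (integral_nonneg fun t => gaussianPDFReal_nonneg 0 1 t)]

lemma cdf_sub (a b : ℝ) : stdGaussianCDF b - stdGaussianCDF a
    = ∫ t in a..b, gaussianPDFReal 0 1 t := by
  rw [cdf_eq, cdf_eq]
  exact intervalIntegral.integral_Iic_sub_Iic
    (integrable_gaussianPDFReal 0 1).integrableOn (integrable_gaussianPDFReal 0 1).integrableOn

lemma pdf_le (t : ℝ) : gaussianPDFReal 0 1 t ≤ (Real.sqrt (2 * Real.pi))⁻¹ := by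
  rw [gaussianPDFReal]
  simp only [NNReal.coe_one, mul_one, sub_zero]
  calc (Real.sqrt (2 * Real.pi))⁻¹ * Real.exp (-t ^ 2 / 2)
      ≤ (Real.sqrt (2 * Real.pi))⁻¹ * 1 := by
        have h1 : Real.exp (-t ^ 2 / 2) ≤ 1 :=
          Real.exp_le_one_iff.mpr (by nlinarith [sq_nonneg t])
        have h2 : (0:ℝ) ≤ (Real.sqrt (2 * Real.pi))⁻¹ := by positivity
        nlinarith
    _ = _ := mul_one _

lemma cdf_lipschitz (a h : ℝ) (hh : 0 ≤ h) :
    |stdGaussianCDF (a + h) - stdGaussianCDF a| ≤ (Real.sqrt (2 * Real.pi))⁻¹ * h := by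
  rw [cdf_sub]
  have := intervalIntegral.norm_integral_le_of_norm_le_const
    (C := (Real.sqrt (2 * Real.pi))⁻¹) (a := a) (b := a + h)
    (f := gaussianPDFReal 0 1) (fun t _ => by
      rw [Real.norm_eq_abs, abs_of_nonneg (gaussianPDFReal_nonneg 0 1 t)]
      exact pdf_le t)
  rw [Real.norm_eq_abs] at this
  simpa [abs_of_nonneg hh] using this

lemma cdf_hasDeriv (a : ℝ) : HasDerivAt stdGaussianCDF (gaussianPDFReal 0 1 a) a := by
  have hg : Continuous (gaussianPDFReal 0 1) := by
    rw [gaussianPDFReal_def]; fun_prop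
  have key : ∀ x, stdGaussianCDF x = stdGaussianCDF a + ∫ t in a..x, gaussianPDFReal 0 1 t := by
    intro x
    rw [← cdf_sub]; ring
  have hd : HasDerivAt (fun x => stdGaussianCDF a + ∫ t in a..x, gaussianPDFReal 0 1 t)
      (gaussianPDFReal 0 1 a) a := by
    have := (intervalIntegral.integral_hasDerivAt_right (a := a) (b := a)
      (integrable_gaussianPDFReal 0 1).intervalIntegrable
      hg.stronglyMeasurable.stronglyMeasurableAtFilter
      hg.continuousAt)
    simpa using this
  exact hd.congr_of_eventuallyEq (Filter.Eventually.of_forall fun x => (key x))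

lemma cdf_measurable : Measurable stdGaussianCDF := by
  have : Monotone stdGaussianCDF := fun x y hxy =>
    ENNReal.toReal_mono (measure_ne_top _ _) (measure_mono (Set.Iic_subset_Iic.mpr hxy))
  exact this.measurable

lemma sqrt_tendsto : Filter.Tendsto Real.sqrt Filter.atTop Filter.atTop :=
  Filter.tendsto_atTop_atTop_of_monotone (fun a b h => Real.sqrt_le_sqrt h)
    (fun b => ⟨b ^ 2, by rw [Real.sqrt_sq_eq_abs]; exact le_abs_self b⟩)

lemma cdf_le_one (x : ℝ) : stdGaussianCDF x ≤ 1 := by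
  rw [stdGaussianCDF]
  exact ENNReal.toReal_le_of_le_ofReal one_pos.le (by simpa using prob_le_one)

lemma cdf_nonneg (x : ℝ) : 0 ≤ stdGaussianCDF x := ENNReal.toReal_nonneg

/-- Corollary 1 (average-case LiRA power-law), precise form: with
`TPR(S) = ∫ Φ(γ₀ + r(ω)/√S) dP(ω)` for integrable `r ≥ 0`,
`√S·(TPR(S) − Φ(γ₀)) → φ(γ₀)·∫ r dP` where `φ(u) = (1/√(2π))·e^{−u²/2}`. -/
theorem stmt_13 {Ω : Type*} [MeasurableSpace Ω] (P : Measure Ω) [IsProbabilityMeasure P]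
    (r : Ω → ℝ) (hr : ∀ ω, 0 ≤ r ω) (hint : Integrable r P) (γ₀ : ℝ) :
    Filter.Tendsto
      (fun S : ℝ =>
        Real.sqrt S *
          ((∫ ω, stdGaussianCDF (γ₀ + r ω / Real.sqrt S) ∂P) - stdGaussianCDF γ₀))
      Filter.atTop
      (nhds ((1 / Real.sqrt (2 * Real.pi)) * Real.exp (-γ₀ ^ 2 / 2) * ∫ ω, r ω ∂P)) := by
  set C : ℝ := (Real.sqrt (2 * Real.pi))⁻¹ with hC
  set F : ℝ → Ω → ℝ := fun S ω =>
    Real.sqrt S * (stdGaussianCDF (γ₀ + r ω / Real.sqrt S) - stdGaussianCDF γ₀) with hF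
  have hrm : AEMeasurable r P := hint.aemeasurable
  have hmeasS : ∀ S : ℝ, AEStronglyMeasurable
      (fun ω => stdGaussianCDF (γ₀ + r ω / Real.sqrt S)) P := fun S =>
    (cdf_measurable.comp_aemeasurable (((hrm.div_const _).const_add γ₀))).aestronglyMeasurable
  have hintS : ∀ S : ℝ, Integrable (fun ω => stdGaussianCDF (γ₀ + r ω / Real.sqrt S)) P := by
    intro S
    refine ((integrable_const (1:ℝ)).mono' (hmeasS S) (Filter.Eventually.of_forall fun ω => ?_))
    rw [Real.norm_eq_abs, abs_of_nonneg (cdf_nonneg _)]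
    exact cdf_le_one _
  have hval : gaussianPDFReal 0 1 γ₀
      = 1 / Real.sqrt (2 * Real.pi) * Real.exp (-γ₀ ^ 2 / 2) := by
    rw [gaussianPDFReal]
    simp [one_div]
  have key : Filter.Tendsto (fun S => ∫ ω, F S ω ∂P) Filter.atTop
      (nhds (∫ ω, gaussianPDFReal 0 1 γ₀ * r ω ∂P)) := by
    refine tendsto_integral_filter_of_dominated_convergence (fun ω => C * r ω)
      (Filter.Eventually.of_forall fun S => ?_) ?_ (hint.const_mul C) ?_
    · exact ((hmeasS S).sub aestronglyMeasurable_const).const_mul _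
    · filter_upwards [Filter.eventually_ge_atTop (1:ℝ)] with S hS
      refine Filter.Eventually.of_forall fun ω => ?_
      have hS0 : (0:ℝ) < Real.sqrt S := Real.sqrt_pos.mpr (lt_of_lt_of_le one_pos hS)
      have hlip := cdf_lipschitz γ₀ (r ω / Real.sqrt S) (div_nonneg (hr ω) hS0.le)
      rw [hF, Real.norm_eq_abs, abs_mul, abs_of_nonneg hS0.le]
      calc Real.sqrt S * |stdGaussianCDF (γ₀ + r ω / Real.sqrt S) - stdGaussianCDF γ₀|
          ≤ Real.sqrt S * (C * (r ω / Real.sqrt S)) := by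
            exact mul_le_mul_of_nonneg_left hlip hS0.le
        _ = C * r ω := by field_simp
    · refine Filter.Eventually.of_forall fun ω => ?_
      rcases eq_or_lt_of_le (hr ω) with h0 | hpos
      · have : ∀ S : ℝ, F S ω = 0 := fun S => by simp [hF, ← h0]
        simp only [this, ← h0, mul_zero]
        exact tendsto_const_nhds
      · have hslope := (cdf_hasDeriv γ₀)
        rw [hasDerivAt_iff_tendsto_slope] at hslope
        have hh : Filter.Tendsto (fun S : ℝ => γ₀ + r ω / Real.sqrt S) Filter.atTop
            (nhdsWithin γ₀ {γ₀}ᶜ) := by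
          rw [tendsto_nhdsWithin_iff]
          constructor
          · have h1 : Filter.Tendsto (fun S : ℝ => r ω / Real.sqrt S) Filter.atTop (nhds 0) := by
              simpa [div_eq_mul_inv] using
                (sqrt_tendsto.inv_tendsto_atTop).const_mul (r ω)
            simpa using tendsto_const_nhds.add h1
          · filter_upwards [Filter.eventually_ge_atTop (1:ℝ)] with S hS
            have hS0 : (0:ℝ) < Real.sqrt S := Real.sqrt_pos.mpr (lt_of_lt_of_le one_pos hS)
            have : 0 < r ω / Real.sqrt S := div_pos hpos hS0
            simp only [Set.mem_compl_iff, Set.mem_singleton_iff]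
            linarith
        have hcomp := (hslope.comp hh).mul_const (r ω)
        refine hcomp.congr' ?_
        filter_upwards [Filter.eventually_ge_atTop (1:ℝ)] with S hS
        have hS0 : (0:ℝ) < Real.sqrt S := Real.sqrt_pos.mpr (lt_of_lt_of_le one_pos hS)
        have hr0 : r ω ≠ 0 := ne_of_gt hpos
        simp only [Function.comp_apply, slope_def_field, hF, add_sub_cancel_left]
        rw [div_div_eq_mul_div, div_mul_eq_mul_div, div_eq_iff hr0]
        ring
  have heq : ∀ S : ℝ, Real.sqrt S *
      ((∫ ω, stdGaussianCDF (γ₀ + r ω / Real.sqrt S) ∂P) - stdGaussianCDF γ₀)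
      = ∫ ω, F S ω ∂P := by
    intro S
    rw [hF]
    rw [integral_const_mul, integral_sub (hintS S) (integrable_const _), integral_const]
    simp
  have hlim : (∫ ω, gaussianPDFReal 0 1 γ₀ * r ω ∂P)
      = 1 / Real.sqrt (2 * Real.pi) * Real.exp (-γ₀ ^ 2 / 2) * ∫ ω, r ω ∂P := by
    rw [integral_const_mul, hval]
  rw [← hlim]
  exact key.congr fun S => (heq S).symm
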